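/- (Boundary sum bound) Let n ≥ 1, m_max ≥ 1, and natural numbers p < q and L > m_max. Let ∂[qL]ⁿ := [qL]ⁿ \ [qL − m_max]ⁿ denote the boundary shell of the torus [qL]ⁿ. Then for every l⃗′ ∈ [pL]ⁿ, Σ_{l⃗ ∈ ∂[qL]ⁿ} exp(−d^{qL}(l⃗,l⃗′)/m_max) ≤ (2 m_max)ⁿ e^{√n/m_max} Sₙ Γ(n), where Sₙ = 2 π^{n/2} / Γ(n/2) is the surface area of the n-dimensional unit ball and Γ is the Gamma function. -/

import Mathlib

set_option maxHeartbeats 1000000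
set_option synthInstance.maxHeartbeats 400000

open scoped BigOperators
open Complex

noncomputable section

namespace MultiPeriodic

/-- The representative of `a : ZMod N` (with `N = 2L`) in `[L] = {-L+1, …, L}`. -/
def sval {N : ℕ} [NeZero N] (a : ZMod N) : ℤ :=
  if 2 * a.val ≤ N then (a.val : ℤ) else (a.val : ℤ) - N

/-- The torus distance `d^L` on `[L]ⁿ` (realized as `(ZMod (2L))ⁿ`). -/
def torusDist {n N : ℕ} [NeZero N] (l l' : Fin n → ZMod N) : ℝ :=
  Real.sqrt (∑ i, ((min ((l i - l' i).val) (N - (l i - l' i).val) : ℕ) : ℝ) ^ 2)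

variable {H : Type} [NormedAddCommGroup H] [InnerProductSpace ℂ H]

/-- The Floquet–Hilbert space `ℂ^{[L]ⁿ} ⊗ H`, realized as the `ℓ²`-space of
`H`-valued functions on the torus `[L]ⁿ = (ZMod (2L))ⁿ`. -/
abbrev FSpace (n N : ℕ) (H : Type) [NormedAddCommGroup H] [InnerProductSpace ℂ H] : Type :=
  PiLp 2 (fun _ : Fin n → ZMod N => H)

instance {n N : ℕ} [CompleteSpace H] : CompleteSpace (FSpace n N H) :=
  inferInstanceAs (CompleteSpace (PiLp 2 (fun _ : Fin n → ZMod N => H)))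

variable {n N : ℕ} [NeZero N]

/-- Inclusion `H →L ℂ^{[L]ⁿ} ⊗ H` of the component labelled by `l`. -/
def inclL (l : Fin n → ZMod N) : H →L[ℂ] FSpace n N H :=
  ((PiLp.continuousLinearEquiv 2 ℂ (fun _ : Fin n → ZMod N => H)).symm.toContinuousLinearMap).comp
    (ContinuousLinearMap.pi (fun l' => if l' = l then ContinuousLinearMap.id ℂ H else 0))

/-- Projection `ℂ^{[L]ⁿ} ⊗ H →L H` onto the component labelled by `l`. -/
def projL (l : Fin n → ZMod N) : FSpace n N H →L[ℂ] H :=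
  (ContinuousLinearMap.proj l).comp
    (PiLp.continuousLinearEquiv 2 ℂ (fun _ : Fin n → ZMod N => H)).toContinuousLinearMap

/-- The operator-valued block `⟨l| A |l'⟩` of an operator `A` on `ℂ^{[L]ⁿ} ⊗ H`. -/
def block (A : FSpace n N H →L[ℂ] FSpace n N H) (l l' : Fin n → ZMod N) : H →L[ℂ] H :=
  (projL l).comp (A.comp (inclL l'))

/-- The canonical map of an integer vector `m⃗ ∈ ℤⁿ` into the torus `(ZMod N)ⁿ`. -/
def mcast (m : Fin n → ℤ) : Fin n → ZMod N := fun i => ((m i : ZMod N))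

/-- `Add_{m⃗}^L = Σ_{l⃗∈[L]ⁿ} |l⃗⊕m⃗⟩⟨l⃗|` (tensored with the identity on `H`). -/
def addOp (m : Fin n → ℤ) : FSpace n N H →L[ℂ] FSpace n N H :=
  ∑ l : Fin n → ZMod N, (inclL (l + mcast m)).comp (projL l)

/-- `l⃗ · ω⃗`, where `l⃗ ∈ [L]ⁿ` is identified with its representative in `{-L+1,…,L}ⁿ`. -/
def ldotω (ω : Fin n → ℝ) (l : Fin n → ZMod N) : ℝ :=
  ∑ i, (sval (l i) : ℝ) * ω i

/-- `m⃗ · ω⃗` for an integer vector `m⃗`. -/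
def mdotω (ω : Fin n → ℝ) (m : Fin n → ℤ) : ℝ :=
  ∑ i, (m i : ℝ) * ω i

/-- The linear-potential Hamiltonian `𝖧_LP^L = Σ_{l⃗∈[L]ⁿ} (l⃗·ω⃗) |l⃗⟩⟨l⃗| ⊗ I`. -/
def HLP (ω : Fin n → ℝ) : FSpace n N H →L[ℂ] FSpace n N H :=
  ∑ l : Fin n → ZMod N, ((ldotω ω l : ℝ) : ℂ) • ((inclL l).comp (projL l))

/-- The hopping part `Σ_{m⃗∈M} Add_{m⃗}^L ⊗ H_{m⃗}` of the effective Hamiltonian. -/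
def HAdd (M : Finset (Fin n → ℤ)) (Hm : (Fin n → ℤ) → H →L[ℂ] H) :
    FSpace n N H →L[ℂ] FSpace n N H :=
  ∑ m ∈ M, ∑ l : Fin n → ZMod N, (inclL (l + mcast m)).comp ((Hm m).comp (projL l))

/-- The effective Hamiltonian `𝖧^L = Σ_{m⃗∈M} Add_{m⃗}^L ⊗ H_{m⃗} − 𝖧_LP^L`. -/
def Heff (M : Finset (Fin n → ℤ)) (Hm : (Fin n → ℤ) → H →L[ℂ] H) (ω : Fin n → ℝ) :
    FSpace n N H →L[ℂ] FSpace n N H :=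
  HAdd M Hm - HLP ω

/-- The multi-periodic Hamiltonian `H(t) = Σ_{m⃗∈M} H_{m⃗} e^{−i m⃗·ω⃗ t}`. -/
def Ht (M : Finset (Fin n → ℤ)) (Hm : (Fin n → ℤ) → H →L[ℂ] H) (ω : Fin n → ℝ) (t : ℝ) :
    H →L[ℂ] H :=
  ∑ m ∈ M, Complex.exp (-Complex.I * ((mdotω ω m : ℝ) : ℂ) * (t : ℝ)) • Hm m

variable [FiniteDimensional ℂ H]

/-- The time evolution `e^{−i 𝖧^L t}` generated by the effective Hamiltonian. -/
def expEff (M : Finset (Fin n → ℤ)) (Hm : (Fin n → ℤ) → H →L[ℂ] H) (ω : Fin n → ℝ) (t : ℝ) :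
    FSpace n N H →L[ℂ] FSpace n N H :=
  NormedSpace.exp ((-Complex.I * (t : ℂ)) • Heff M Hm ω)

/-- `U_{l⃗′}^{L}(t) = Σ_{l⃗∈[L]ⁿ} e^{−i l⃗·ω⃗ t} ⟨l⃗| e^{−i 𝖧^{L} t} |l⃗′⟩`. -/
def Ulp (M : Finset (Fin n → ℤ)) (Hm : (Fin n → ℤ) → H →L[ℂ] H) (ω : Fin n → ℝ)
    (l' : Fin n → ZMod N) (t : ℝ) : H →L[ℂ] H :=
  ∑ l : Fin n → ZMod N,
    Complex.exp (-Complex.I * ((ldotω ω l : ℝ) : ℂ) * (t : ℂ)) •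
      block (expEff M Hm ω t) l l'

/-- `γ`, the supremum over `x⃗ ∈ [0,2π)ⁿ` of `‖Σ_{m⃗∈M, m⃗≠0} H_{m⃗} e^{−i m⃗·x⃗}‖`. -/
def gammaSup (n : ℕ) (M : Finset (Fin n → ℤ)) (Hm : (Fin n → ℤ) → H →L[ℂ] H) : ℝ :=
  sSup {r : ℝ | ∃ x : Fin n → ℝ, (∀ i, x i ∈ Set.Ico (0 : ℝ) (2 * Real.pi)) ∧
    r = ‖∑ m ∈ M.erase 0, Complex.exp (-Complex.I * ((∑ i, (m i : ℝ) * x i : ℝ) : ℂ)) • Hm m‖}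

/-- The constant `C_{n,m_max} = 4 (2√π m_max)ⁿ (Γ(n)/Γ(n/2)) e^{√n/m_max}`. -/
def Cnm (n : ℕ) (mmax : ℝ) : ℝ :=
  4 * (2 * Real.sqrt Real.pi * mmax) ^ n * (Real.Gamma n / Real.Gamma (n / 2)) *
    Real.exp (Real.sqrt n / mmax)

/-- The Euclidean norm of an integer vector. -/
def enorm' (m : Fin n → ℤ) : ℝ := Real.sqrt (∑ i, ((m i : ℝ)) ^ 2)

end MultiPeriodic

/-- One-dimensional torus sum bound. -/
lemma oneDim_sum_le (N : ℕ) [NeZero N] (a : ℝ) (ha : 1 ≤ a) :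
    ∑ c : ZMod N, Real.exp (-((min c.val (N - c.val) : ℕ) : ℝ) / a) ≤ 1 + 2 * a := by
  have ha0 : (0:ℝ) < a := lt_of_lt_of_le one_pos ha
  set r := Real.exp (-1 / a) with hr
  have hr0 : 0 < r := Real.exp_pos _
  have hr1 : r < 1 := by
    rw [hr, Real.exp_lt_one_iff]
    exact div_neg_of_neg_of_pos (by norm_num) ha0
  have hpow : ∀ k : ℕ, Real.exp (-(k:ℝ) / a) = r ^ k := by
    intro k; rw [hr, ← Real.exp_nat_mul]; congr 1; ring
  have hra : r * (a + 1) ≤ a := by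
    have h1 : 1 / a + 1 ≤ Real.exp (1 / a) := Real.add_one_le_exp _
    have h2 : r * Real.exp (1 / a) = 1 := by
      rw [hr, ← Real.exp_add, show -1/a + 1/a = 0 by ring, Real.exp_zero]
    have h4 : r * a * (1/a + 1) ≤ r * a * Real.exp (1/a) :=
      mul_le_mul_of_nonneg_left h1 (by positivity)
    have h5 : r * a * (1/a + 1) = r * (a + 1) := by field_simp; ring
    have h6 : r * a * Real.exp (1/a) = a := by
      calc r * a * Real.exp (1/a) = a * (r * Real.exp (1/a)) := by ring
        _ = a := by rw [h2, mul_one]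
    linarith
  have hterm : ∀ c : ZMod N,
      Real.exp (-((min c.val (N - c.val) : ℕ) : ℝ) / a) ≤ r ^ c.val + r ^ (N - c.val) := by
    intro c
    rcases min_cases c.val (N - c.val) with ⟨h1, _⟩ | ⟨h1, _⟩ <;> rw [h1, hpow]
    · nlinarith [pow_nonneg hr0.le (N - c.val)]
    · nlinarith [pow_nonneg hr0.le c.val]
  have h1r : 0 < 1 - r := by linarith
  have hg1 : ∑ j ∈ Finset.range N, r ^ j ≤ 1 / (1 - r) := by
    rw [geom_sum_eq hr1.ne]
    have he : (r ^ N - 1) / (r - 1) = (1 - r ^ N) / (1 - r) := by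
      rw [← neg_div_neg_eq]; ring_nf
    rw [he, div_le_div_iff₀ h1r h1r]
    nlinarith [pow_nonneg hr0.le N]
  have hg2 : ∑ j ∈ Finset.range N, r ^ (N - j) ≤ r * (1 / (1 - r)) := by
    have hcg : ∀ j ∈ Finset.range N, r ^ (N - j) = r * r ^ (N - 1 - j) := by
      intro j hj
      rw [← pow_succ']
      congr 1
      have := Finset.mem_range.mp hj
      omega
    rw [Finset.sum_congr rfl hcg, ← Finset.mul_sum, Finset.sum_range_reflect]
    exact mul_le_mul_of_nonneg_left hg1 hr0.le
  calc ∑ c : ZMod N, Real.exp (-((min c.val (N - c.val) : ℕ) : ℝ) / a)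
      ≤ ∑ c : ZMod N, (r ^ c.val + r ^ (N - c.val)) :=
        Finset.sum_le_sum (fun c _ => hterm c)
    _ = ∑ j ∈ Finset.range N, (r ^ j + r ^ (N - j)) := by
        refine Finset.sum_nbij' (fun c => c.val) (fun j => (j : ZMod N))
          (fun c _ => Finset.mem_range.mpr (ZMod.val_lt c))
          (fun j _ => Finset.mem_univ _)
          (fun c _ => ZMod.natCast_rightInverse c)
          (fun j hj => ZMod.val_cast_of_lt (Finset.mem_range.mp hj))
          (fun c _ => rfl)
    _ = (∑ j ∈ Finset.range N, r ^ j) + ∑ j ∈ Finset.range N, r ^ (N - j) :=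
        Finset.sum_add_distrib
    _ ≤ 1 / (1 - r) + r * (1 / (1 - r)) := add_le_add hg1 hg2
    _ = (1 + r) / (1 - r) := by ring
    _ ≤ 1 + 2 * a := by
        rw [div_le_iff₀ h1r]; nlinarith


lemma gamma_aux (n : ℕ) : 1 ≤ n →
    Real.sqrt n ^ n ≤ 2 * Real.pi ^ ((n : ℝ) / 2) / Real.Gamma ((n : ℝ) / 2) * Real.Gamma (n : ℝ) := by
  induction n using Nat.strong_induction_on with
  | _ n ih =>
    intro hn
    rcases n with _ | _ | _ | m
    · omega
    · -- n = 1
      have h1 : ((1:ℕ):ℝ) = 1 := by norm_num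
      rw [h1]
      rw [show (1:ℝ)/2 = (1/2 : ℝ) by norm_num, Real.Gamma_one_half_eq, Real.Gamma_one]
      have : Real.pi ^ ((1:ℝ)/2) = Real.sqrt Real.pi := by
        rw [Real.sqrt_eq_rpow]
      rw [this]
      have hπ : 0 < Real.sqrt Real.pi := Real.sqrt_pos.mpr Real.pi_pos
      rw [mul_one, mul_div_assoc, div_self hπ.ne', mul_one]
      simp [Real.sqrt_one]
    · -- n = 2
      have h2 : ((2:ℕ):ℝ) = 2 := by norm_num
      rw [h2, show (2:ℝ)/2 = 1 by norm_num, Real.Gamma_one, Real.Gamma_two, Real.rpow_one]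
      rw [Real.sq_sqrt (by norm_num : (0:ℝ) ≤ 2)]
      nlinarith [Real.pi_gt_three]
    · -- n = m + 3
      have IH := ih (m+1) (by omega) (by omega)
      set x : ℝ := (m : ℝ) + 1 with hx
      have hx1 : (1:ℝ) ≤ x := by rw [hx]; nlinarith [Nat.cast_nonneg (α := ℝ) m]
      have hx0 : (0:ℝ) < x := by linarith
      have hcast1 : ((m+1 : ℕ) : ℝ) = x := by push_cast; rw [hx]
      rw [hcast1] at IH
      have hcast : ((m+1+1+1 : ℕ) : ℝ) = x + 2 := by push_cast; rw [hx]; ring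
      rw [hcast]
      have hΓx : 0 < Real.Gamma x := Real.Gamma_pos_of_pos hx0
      have hΓx2 : 0 < Real.Gamma (x/2) := Real.Gamma_pos_of_pos (by positivity)
      have hG1 : Real.Gamma (x + 2) = (x+1) * x * Real.Gamma x := by
        rw [show x + 2 = (x + 1) + 1 by ring, Real.Gamma_add_one (by positivity),
          Real.Gamma_add_one (by positivity)]
        ring
      have hG2 : Real.Gamma ((x+2)/2) = x/2 * Real.Gamma (x/2) := by
        rw [show (x+2)/2 = x/2 + 1 by ring, Real.Gamma_add_one (by positivity)]
      have hP : Real.pi ^ ((x+2)/2) = Real.pi ^ (x/2) * Real.pi := by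
        rw [show (x+2)/2 = x/2 + 1 by ring, Real.rpow_add Real.pi_pos, Real.rpow_one]
      have hpipow : 0 < Real.pi ^ (x/2) := Real.rpow_pos_of_pos Real.pi_pos _
      have hsqrt : Real.sqrt (x+2) ≤ Real.sqrt x * Real.exp (1/x) := by
        have hxx : x * (1/x) = 1 := mul_one_div_cancel hx0.ne'
        have h1 : x + 2 ≤ x * Real.exp (2/x) := by
          have h := Real.add_one_le_exp (2/x)
          have hxx2 : x * (2/x) = 2 := by field_simp
          nlinarith [mul_le_mul_of_nonneg_left h hx0.le]
        calc Real.sqrt (x+2) ≤ Real.sqrt (x * Real.exp (2/x)) := Real.sqrt_le_sqrt h1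
          _ = Real.sqrt x * Real.sqrt (Real.exp (2/x)) := Real.sqrt_mul hx0.le _
          _ = Real.sqrt x * Real.exp (1/x) := by
              rw [show (2:ℝ)/x = 1/x + 1/x by ring, Real.exp_add,
                Real.sqrt_mul_self (Real.exp_nonneg _)]
      have hpow : Real.sqrt (x+2) ^ (m+1) ≤ Real.sqrt x ^ (m+1) * Real.exp 1 := by
        calc Real.sqrt (x+2) ^ (m+1) ≤ (Real.sqrt x * Real.exp (1/x)) ^ (m+1) :=
              pow_le_pow_left₀ (Real.sqrt_nonneg _) hsqrt _
          _ = Real.sqrt x ^ (m+1) * Real.exp (1/x) ^ (m+1) := mul_pow _ _ _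
          _ = Real.sqrt x ^ (m+1) * Real.exp 1 := by
              rw [← Real.exp_nat_mul]
              congr 1
              rw [hcast1, mul_one_div, div_self hx0.ne']
      have hL1 : Real.sqrt (x+2) ^ (m+1+1+1) = (x+2) * Real.sqrt (x+2) ^ (m+1) := by
        rw [show m+1+1+1 = (m+1)+2 by ring, pow_add, Real.sq_sqrt (by linarith : (0:ℝ) ≤ x+2)]
        ring
      have hRHS : 2 * Real.pi ^ ((x+2)/2) / Real.Gamma ((x+2)/2) * Real.Gamma (x+2)
          = (2 * Real.pi ^ (x/2) / Real.Gamma (x/2) * Real.Gamma x) * (2 * Real.pi * (x+1)) := by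
        rw [hG1, hG2, hP]
        field_simp
      rw [hL1, hRHS]
      have he : Real.exp 1 < 2.7182818286 := Real.exp_one_lt_d9
      have hpi : 3.141592 < Real.pi := Real.pi_gt_d6
      have hfac : (x+2) * Real.exp 1 ≤ 2 * Real.pi * (x+1) := by nlinarith [Real.exp_pos 1]
      calc (x+2) * Real.sqrt (x+2)^(m+1)
          ≤ (x+2) * (Real.sqrt x ^(m+1) * Real.exp 1) :=
            mul_le_mul_of_nonneg_left hpow (by linarith)
        _ = ((x+2) * Real.exp 1) * Real.sqrt x ^ (m+1) := by ring
        _ ≤ (2 * Real.pi * (x+1)) * Real.sqrt x ^ (m+1) :=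
            mul_le_mul_of_nonneg_right hfac (pow_nonneg (Real.sqrt_nonneg _) _)
        _ ≤ (2 * Real.pi * (x+1)) * (2 * Real.pi ^ (x/2) / Real.Gamma (x/2) * Real.Gamma x) :=
            mul_le_mul_of_nonneg_left IH (by positivity)
        _ = _ := by ring

/-- **Boundary sum bound.**
For `n ≥ 1`, `m_max ≥ 1`, `p < q`, `L > m_max` and every `l⃗′ ∈ [pL]ⁿ`,
`Σ_{l⃗ ∈ ∂[qL]ⁿ} exp(−d^{qL}(l⃗,l⃗′)/m_max) ≤ (2 m_max)ⁿ e^{√n/m_max} Sₙ Γ(n)`,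
where `∂[qL]ⁿ = [qL]ⁿ \ [qL − m_max]ⁿ` and `Sₙ = 2 π^{n/2} / Γ(n/2)`. -/
theorem boundary_sum_bound
    (n : ℕ) (hn : 1 ≤ n) (mmax : ℕ) (hmmax : 1 ≤ mmax)
    (p q L : ℕ) [NeZero q] [NeZero L] (hpq : p < q) (hL : mmax < L)
    (l' : Fin n → ℤ) (hl' : ∀ i, l' i ∈ Finset.Icc (-(p * L : ℤ) + 1) (p * L : ℤ)) :
    ∑ l ∈ Finset.univ.filter (fun l : Fin n → ZMod (2 * q * L) =>
        ¬ ∀ i, MultiPeriodic.sval (l i) ∈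
          Finset.Icc (-(q * L : ℤ) + 1 + (mmax : ℤ)) ((q * L : ℤ) - (mmax : ℤ))),
      Real.exp (-(MultiPeriodic.torusDist l (fun i => ((l' i : ZMod (2 * q * L))))) / mmax) ≤
    (2 * (mmax : ℝ)) ^ n * Real.exp (Real.sqrt n / mmax) *
      (2 * Real.pi ^ ((n : ℝ) / 2) / Real.Gamma ((n : ℝ) / 2)) * Real.Gamma n := by
  haveI hNZ : NeZero (2 * q * L) :=
    ⟨mul_ne_zero (mul_ne_zero two_ne_zero (NeZero.ne q)) (NeZero.ne L)⟩
  set N := 2 * q * L with hN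
  set M : ℝ := (mmax : ℝ) with hM
  have hM1 : (1:ℝ) ≤ M := by rw [hM]; exact_mod_cast hmmax
  have hM0 : (0:ℝ) < M := by linarith
  set s := Real.sqrt n with hs
  have hs1 : (1:ℝ) ≤ s := by
    rw [hs, show (1:ℝ) = Real.sqrt 1 by simp]
    exact Real.sqrt_le_sqrt (by exact_mod_cast hn)
  have hs0 : (0:ℝ) < s := lt_of_lt_of_le one_pos hs1
  have hss : s * s = (n:ℝ) := Real.mul_self_sqrt (by positivity)
  set a := s * M with ha
  have ha1 : (1:ℝ) ≤ a := one_le_mul_of_one_le_of_one_le hs1 hM1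
  have ha0 : (0:ℝ) < a := by linarith
  set l'' : Fin n → ZMod N := fun i => ((l' i : ZMod N)) with hl''
  set g : ZMod N → ℝ := fun c => Real.exp (-((min c.val (N - c.val) : ℕ) : ℝ) / a) with hg
  have hg0 : ∀ c, 0 ≤ g c := fun c => Real.exp_nonneg _
  -- Step A : pointwise bound
  have hterm : ∀ l : Fin n → ZMod N,
      Real.exp (-(MultiPeriodic.torusDist l l'') / M) ≤ ∏ i, g (l i - l'' i) := by
    intro l
    have hprod : ∏ i, g (l i - l'' i)
        = Real.exp (∑ i, -((min ((l i - l'' i).val) (N - (l i - l'' i).val) : ℕ) : ℝ) / a) := by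
      rw [Real.exp_sum]
    rw [hprod, Real.exp_le_exp]
    have hsum : ∑ i, -((min ((l i - l'' i).val) (N - (l i - l'' i).val) : ℕ) : ℝ) / a
        = -(∑ i, ((min ((l i - l'' i).val) (N - (l i - l'' i).val) : ℕ) : ℝ)) / a := by
      rw [neg_div, Finset.sum_div, ← Finset.sum_neg_distrib]
      exact Finset.sum_congr rfl (fun i _ => by rw [neg_div])
    rw [hsum, div_le_div_iff₀ hM0 ha0, neg_mul, neg_mul, neg_le_neg_iff]
    have hkey : (∑ i, ((min ((l i - l'' i).val) (N - (l i - l'' i).val) : ℕ) : ℝ))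
        ≤ s * MultiPeriodic.torusDist l l'' := by
      unfold MultiPeriodic.torusDist
      rw [hs, ← Real.sqrt_mul (by positivity : (0:ℝ) ≤ (n:ℝ))]
      have h1 : (0:ℝ) ≤ ∑ i, ((min ((l i - l'' i).val) (N - (l i - l'' i).val) : ℕ) : ℝ) :=
        Finset.sum_nonneg (fun i _ => by positivity)
      have h2 : (0:ℝ) ≤ (n:ℝ) * ∑ i, ((min ((l i - l'' i).val) (N - (l i - l'' i).val) : ℕ) : ℝ)^2 := by
        positivity
      rw [Real.le_sqrt h1 h2]
      have h3 := sq_sum_le_card_mul_sum_sq (s := (Finset.univ : Finset (Fin n)))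
        (f := fun i => ((min ((l i - l'' i).val) (N - (l i - l'' i).val) : ℕ) : ℝ))
      simpa [Finset.card_univ] using h3
    have hd0 : 0 ≤ MultiPeriodic.torusDist l l'' := Real.sqrt_nonneg _
    calc (∑ i, ((min ((l i - l'' i).val) (N - (l i - l'' i).val) : ℕ) : ℝ)) * M
        ≤ (s * MultiPeriodic.torusDist l l'') * M :=
          mul_le_mul_of_nonneg_right hkey hM0.le
      _ = MultiPeriodic.torusDist l l'' * a := by rw [ha]; ring
  -- Step B+C : sum bound
  have hBC : ∑ l ∈ Finset.univ.filter (fun l : Fin n → ZMod N =>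
        ¬ ∀ i, MultiPeriodic.sval (l i) ∈
          Finset.Icc (-(q * L : ℤ) + 1 + (mmax : ℤ)) ((q * L : ℤ) - (mmax : ℤ))),
      Real.exp (-(MultiPeriodic.torusDist l l'') / M) ≤ (1 + 2*a)^n := by
    calc _ ≤ ∑ l : Fin n → ZMod N, Real.exp (-(MultiPeriodic.torusDist l l'') / M) :=
          Finset.sum_le_sum_of_subset_of_nonneg (Finset.filter_subset _ _)
            (fun l _ _ => Real.exp_nonneg _)
      _ ≤ ∑ l : Fin n → ZMod N, ∏ i, g (l i - l'' i) :=
          Finset.sum_le_sum (fun l _ => hterm l)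
      _ = ∏ i : Fin n, ∑ c : ZMod N, g (c - l'' i) := by
          rw [Finset.prod_univ_sum, Fintype.piFinset_univ]
      _ = ∏ i : Fin n, ∑ c : ZMod N, g c :=
          Finset.prod_congr rfl (fun i _ =>
            Fintype.sum_equiv (Equiv.subRight (l'' i)) _ _ (fun c => rfl))
      _ ≤ ∏ _i : Fin n, (1 + 2*a) :=
          Finset.prod_le_prod (fun i _ => Finset.sum_nonneg (fun c _ => hg0 c))
            (fun i _ => oneDim_sum_le N a ha1)
      _ = (1 + 2*a)^n := by rw [Finset.prod_const, Finset.card_univ, Fintype.card_fin]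
  -- Step D : constant bound
  have hD1 : (1 + 2*a)^n ≤ (2*M)^n * s^n * Real.exp (s/M) := by
    have h1 : 1 + 2*a ≤ (2*M*s) * Real.exp (1/(2*M*s)) := by
      have h := Real.add_one_le_exp (1/(2*M*s))
      have h2 : (2*M*s) * (1/(2*M*s) + 1) = 1 + 2*a := by
        rw [ha]; field_simp
      nlinarith [mul_le_mul_of_nonneg_left h (by positivity : (0:ℝ) ≤ 2*M*s)]
    calc (1 + 2*a)^n ≤ ((2*M*s) * Real.exp (1/(2*M*s)))^n :=
          pow_le_pow_left₀ (by linarith) h1 n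
      _ = (2*M)^n * s^n * Real.exp (1/(2*M*s))^n := by rw [mul_pow, mul_pow]
      _ = (2*M)^n * s^n * Real.exp ((n:ℝ) * (1/(2*M*s))) := by rw [Real.exp_nat_mul]
      _ ≤ (2*M)^n * s^n * Real.exp (s/M) := by
          apply mul_le_mul_of_nonneg_left _ (by positivity)
          rw [Real.exp_le_exp]
          have : (n:ℝ) * (1/(2*M*s)) = s/(2*M) := by
            rw [← hss]; field_simp
          rw [this]
          rw [div_le_div_iff₀ (by positivity) hM0]
          nlinarith
  have hD2 : s^n ≤ 2 * Real.pi ^ ((n:ℝ)/2) / Real.Gamma ((n:ℝ)/2) * Real.Gamma (n:ℝ) := by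
    rw [hs]; exact gamma_aux n hn
  have hΓpos : 0 < 2 * Real.pi ^ ((n:ℝ)/2) / Real.Gamma ((n:ℝ)/2) * Real.Gamma (n:ℝ) := by
    have h1 : 0 < Real.Gamma ((n:ℝ)/2) := Real.Gamma_pos_of_pos (by positivity)
    have h2 : 0 < Real.Gamma (n:ℝ) := Real.Gamma_pos_of_pos (by exact_mod_cast hn)
    have h3 : 0 < Real.pi ^ ((n:ℝ)/2) := Real.rpow_pos_of_pos Real.pi_pos _
    positivity
  calc _ ≤ (1 + 2*a)^n := hBC
    _ ≤ (2*M)^n * s^n * Real.exp (s/M) := hD1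
    _ ≤ (2*M)^n * (2 * Real.pi ^ ((n:ℝ)/2) / Real.Gamma ((n:ℝ)/2) * Real.Gamma (n:ℝ)) *
          Real.exp (s/M) := by
        apply mul_le_mul_of_nonneg_right _ (Real.exp_nonneg _)
        exact mul_le_mul_of_nonneg_left hD2 (by positivity)
    _ = (2 * M) ^ n * Real.exp (s / M) *
          (2 * Real.pi ^ ((n : ℝ) / 2) / Real.Gamma ((n : ℝ) / 2)) * Real.Gamma (n:ℝ) := by
        ring
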